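/- If (x, z, w) solves x' = -(xw-α₂)x + 1/2, z' = α₀z - η/2, w' = (xw-α₂)w, then x satisfies the second-order equation x'' = (x')²/x - α₂/2 - 1/(4x) at points where x ≠ 0. -/

import Mathlib

open Complex

theorem stmt_6 (α₀ α₂ η : ℂ) (x z w x' x'' : ℝ → ℂ)
    (hx : ∀ t, HasDerivAt x (x' t) t)
    (hx' : ∀ t, HasDerivAt x' (x'' t) t)
    (hxeq : ∀ t, x' t = -(x t * w t - α₂) * x t + 1/2)
    (hz : ∀ t, HasDerivAt z (α₀ * z t - η/2) t)
    (hw : ∀ t, HasDerivAt w ((x t * w t - α₂) * w t) t) :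
    ∀ t, x t ≠ 0 →
      x'' t = (x' t)^2 / x t - α₂/2 - 1/(4 * x t) := by
  intro t hxt
  have hxfun : x' = fun s => -(x s * w s - α₂) * x s + 1/2 := funext hxeq
  have hg : HasDerivAt (fun s => -(x s * w s - α₂) * x s + 1/2)
      ((-(x' t * w t + x t * ((x t * w t - α₂) * w t))) * x t
        + (-(x t * w t - α₂)) * x' t) t :=
    ((((hx t).mul (hw t)).sub_const α₂).neg.mul (hx t)).add_const _
  rw [← hxfun] at hg
  have hD := (hx' t).unique hg
  have he : x t * w t * x t = α₂ * x t + 1/2 - x' t := by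
    linear_combination hxeq t
  have key : 4 * x t * x'' t = 4 * (x' t)^2 - 2*α₂*(x t) - 1 := by
    linear_combination (4*x t)*hD +
      (-8*x' t - 4*((x t)^2*w t + α₂*x t + 1/2 - x' t) + 4*α₂*x t) * he
  field_simp
  linear_combination 2 * key
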